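/- The function v ↦ v·h(1/v) is monotone decreasing on (0, ∞), where h(u) = (1+u)·ln(1+u) − u. That is, for all real numbers 0 < v ≤ v', one has v'·h(1/v') ≤ v·h(1/v). -/

import Mathlib

private noncomputable def Gaux : ℝ → ℝ := fun x => (x + 1) * (Real.log (x + 1) - Real.log x)

private lemma Gaux_hasDeriv {x : ℝ} (hx : 0 < x) :
    HasDerivAt Gaux (Real.log (x + 1) - Real.log x - 1 / x) x := by
  have h1 : HasDerivAt (fun x : ℝ => x + 1) 1 x := (hasDerivAt_id x).add_const 1
  have h2 : HasDerivAt (fun x : ℝ => Real.log (x + 1)) (1 / (x + 1)) x := by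
    have := (Real.hasDerivAt_log (by linarith : x + 1 ≠ 0)).comp x h1
    simpa [one_div, Function.comp_def] using this
  have h3 : HasDerivAt Real.log (1 / x) x := by
    simpa [one_div] using Real.hasDerivAt_log hx.ne'
  have : HasDerivAt (fun y : ℝ => (y + 1) * (Real.log (y + 1) - Real.log y))
      (1 * (Real.log (x + 1) - Real.log x) + (x + 1) * (1 / (x + 1) - 1 / x)) x :=
    h1.mul (h2.sub h3)
  convert this using 1
  · rfl
  field_simp
  ring

private lemma Gaux_anti : AntitoneOn Gaux (Set.Ioi 0) := by
  have hint : interior (Set.Ioi (0:ℝ)) = Set.Ioi 0 := interior_Ioi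
  apply antitoneOn_of_deriv_nonpos (convex_Ioi 0)
  · intro x hx
    exact ((Gaux_hasDeriv hx).continuousAt).continuousWithinAt
  · rw [hint]
    intro x hx
    exact (Gaux_hasDeriv hx).differentiableAt.differentiableWithinAt
  · rw [hint]
    intro x hx
    replace hx : 0 < x := hx
    rw [(Gaux_hasDeriv hx).deriv]
    have hlog : Real.log ((x + 1) / x) ≤ (x + 1) / x - 1 :=
      Real.log_le_sub_one_of_pos (by positivity)
    rw [Real.log_div (by linarith) hx.ne'] at hlog
    have : (x + 1) / x - 1 = 1 / x := by field_simp; ring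
    linarith [this ▸ hlog]

private lemma val_eq (v : ℝ) (hv : 0 < v) :
    v * ((1 + 1 / v) * Real.log (1 + 1 / v) - 1 / v) = Gaux v - 1 := by
  have h1 : (1 : ℝ) + 1 / v = (v + 1) / v := by field_simp
  rw [h1, Real.log_div (by linarith) hv.ne', Gaux]
  field_simp

/-- The function `v ↦ v * h (1/v)` is monotone decreasing on `(0, ∞)`,
where `h u = (1+u) * ln (1+u) - u`: for all `0 < v ≤ v'`,
`v' * h (1/v') ≤ v * h (1/v)`. -/
theorem stmt_3 (h : ℝ → ℝ) (hdef : ∀ u : ℝ, 0 < u → h u = (1 + u) * Real.log (1 + u) - u)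
    (v v' : ℝ) (hv : 0 < v) (hvv' : v ≤ v') :
    v' * h (1 / v') ≤ v * h (1 / v) := by
  have hv' : 0 < v' := lt_of_lt_of_le hv hvv'
  rw [hdef _ (by positivity), hdef _ (by positivity), val_eq v hv, val_eq v' hv']
  have := Gaux_anti (Set.mem_Ioi.2 hv) (Set.mem_Ioi.2 hv') hvv'
  linarith
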